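/- For the Ising broadcast process on T(d,h) with fixed d ≥ 2 and ρ ∈ (0,1) satisfying dρ² > 1, the fourth moment satisfies M_{d,ρ,h}(4)/((dρ)^{4h}) → C_{d,ρ}(4) as h → ∞, where C_{d,ρ}(4) := (4(d−1)ρ²·C_{d,ρ}(3) + 3(d−1)·C_{d,ρ}(2)² + 6(d−1)(d−2)ρ²·C_{d,ρ}(2) + (d−1)(d−2)(d−3)ρ⁴)/(d³ρ⁴ − 1), with C_{d,ρ}(2) := (1 − 1/d)·dρ²/(dρ² − 1) and C_{d,ρ}(3) := (1/((dρ)² − 1))·(3·((d−1)²/d)·(dρ²/(dρ² − 1)) + (dρ)²·(1 − 1/d)(1 − 2/d)). -/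

import Mathlib

open Finset

noncomputable section

/-- A configuration of the rooted `d`-ary tree of height `h` with values in `S`:
a vertex at level `ℓ ≤ h` is a path from the root, i.e. a function `Fin ℓ → Fin d`,
and the configuration assigns an element of `S` to every vertex. -/
abbrev TreeConfig (d h : ℕ) (S : Type) := ∀ ℓ : Fin (h + 1), (Fin ℓ.val → Fin d) → S

/-- The value at the root of the tree. -/
def rootOf {d h : ℕ} {S : Type} (σ : TreeConfig d h S) : S :=
  σ ⟨0, Nat.succ_pos h⟩ Fin.elim0

/-- The values at the leaves (level `h`) of the tree, read as a function on root-to-leaf paths. -/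
def leavesOf {d h : ℕ} {S : Type} (σ : TreeConfig d h S) : (Fin h → Fin d) → S :=
  σ ⟨h, Nat.lt_succ_self h⟩

/-- Product over all edges of the tree of an edge weight `W (parent value) (child value)`. -/
def edgeProd {S : Type} (d h : ℕ) (W : S → S → ℝ) (σ : TreeConfig d h S) : ℝ :=
  ∏ ℓ : Fin h, ∏ f : Fin (ℓ.val + 1) → Fin d,
    W (σ ⟨ℓ.val, Nat.lt_succ_of_lt ℓ.isLt⟩ fun i => f i.castSucc)
      (σ ⟨ℓ.val + 1, Nat.succ_lt_succ ℓ.isLt⟩ f)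

/-- Probability of a full configuration under the broadcast process with root prior `ν`
and broadcast channel `W`. -/
def broadcastW {S : Type} (d h : ℕ) (ν : S → ℝ) (W : S → S → ℝ) (σ : TreeConfig d h S) : ℝ :=
  ν (rootOf σ) * edgeProd d h W σ

/-- The real spin value `±1` of a Boolean spin. -/
def spinVal (b : Bool) : ℝ := if b then 1 else -1

/-- The Ising broadcast channel: copy the parent spin with probability `(1+ρ)/2`. -/
def isingEdge (ρ : ℝ) (a b : Bool) : ℝ := if a = b then (1 + ρ) / 2 else (1 - ρ) / 2

/-- Probability of a configuration under the Ising broadcast process with uniform root. -/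
def isingW (d h : ℕ) (ρ : ℝ) (σ : TreeConfig d h Bool) : ℝ :=
  broadcastW d h (fun _ => (1 : ℝ) / 2) (isingEdge ρ) σ

/-- Probability of a configuration under the Ising broadcast process with the root
conditioned to equal `r`. -/
def isingWRooted (d h : ℕ) (ρ : ℝ) (r : Bool) (σ : TreeConfig d h Bool) : ℝ :=
  (if rootOf σ = r then 1 else 0) * edgeProd d h (isingEdge ρ) σ

/-- The sum of the `d^h` leaf spins of a configuration. -/
def leafSum (d h : ℕ) (σ : TreeConfig d h Bool) : ℝ :=
  ∑ f : Fin h → Fin d, spinVal (leavesOf σ f)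

/-- Expectation of a function of the configuration under the Ising broadcast process. -/
def isingExp (d h : ℕ) (ρ : ℝ) (g : TreeConfig d h Bool → ℝ) : ℝ :=
  ∑ σ : TreeConfig d h Bool, isingW d h ρ σ * g σ

/-- `M_{d,ρ,h}(k) = E[(Σ_ℓ X_ℓ)^k | X_root = +1]`. -/
def isingMoment (d h : ℕ) (ρ : ℝ) (k : ℕ) : ℝ :=
  ∑ σ : TreeConfig d h Bool, isingWRooted d h ρ true σ * leafSum d h σ ^ k

/-- Variance of the sum of the leaf spins under the (true) Ising broadcast process. -/
def isingVar (d h : ℕ) (ρ : ℝ) : ℝ :=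
  isingExp d h ρ (fun σ => leafSum d h σ ^ 2) - isingExp d h ρ (leafSum d h) ^ 2

/-- Marginal probability of a leaf spin assignment under the Ising broadcast process. -/
def leafW (d w : ℕ) (ρ : ℝ) (y : (Fin w → Fin d) → Bool) : ℝ :=
  ∑ σ : TreeConfig d w Bool, if leavesOf σ = y then isingW d w ρ σ else 0

/-- Marginal probability of a leaf spin assignment given the root equals `r`. -/
def leafWRooted (d w : ℕ) (ρ : ℝ) (r : Bool) (y : (Fin w → Fin d) → Bool) : ℝ :=
  ∑ σ : TreeConfig d w Bool, if leavesOf σ = y then isingWRooted d w ρ r σ else 0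

/-- Posterior mean `E[X_root | X_leaves = y]` of the root spin given the leaves. -/
def rootPostMean (d w : ℕ) (ρ : ℝ) (y : (Fin w → Fin d) → Bool) : ℝ :=
  (∑ σ : TreeConfig d w Bool,
      if leavesOf σ = y then isingW d w ρ σ * spinVal (rootOf σ) else 0) / leafW d w ρ y

/-- `q_w = E[E[X_root | X_leaves]^2]` for the Ising broadcast process on `T(d,w)`. -/
def qIsing (d w : ℕ) (ρ : ℝ) : ℝ :=
  ∑ y : (Fin w → Fin d) → Bool, leafW d w ρ y * rootPostMean d w ρ y ^ 2

/-- The law `D_m` of the height of the least common ancestor of a uniformly random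
adjacent pair of depth-`w` subtrees: `P(D_m = s) = (d-1) d^{m-s} / (d^m - 1)` for `1 ≤ s ≤ m`. -/
def lcaLaw (d m : ℕ) (s : ℕ) : ℝ :=
  if 1 ≤ s ∧ s ≤ m then ((d : ℝ) - 1) * (d : ℝ) ^ (m - s) / ((d : ℝ) ^ m - 1) else 0

/-- `α = E_{s ∼ D_m}[ρ^{2s}]`. -/
def alphaAR (d m : ℕ) (ρ : ℝ) : ℝ := ∑ s ∈ Finset.Icc 1 m, lcaLaw d m s * ρ ^ (2 * s)

/-- Joint law of the two subtree root spins when their least common ancestor is at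
height `s` above them: a pair of uniform `±1` spins with correlation `ρ^{2s}`. -/
def pairRootW (ρ : ℝ) (s : ℕ) (r r' : Bool) : ℝ :=
  (1 + spinVal r * spinVal r' * ρ ^ (2 * s)) / 4

/-- One-step transition of the autoregressive Ising broadcast process: the conditional law
of the next block of `d^w` leaves given that the previous block equals `y`, averaged over a
least common ancestor height `s ∼ D_m`. -/
def arStep (d w m : ℕ) (ρ : ℝ) (y y' : (Fin w → Fin d) → Bool) : ℝ :=
  ∑ s ∈ Finset.Icc 1 m, lcaLaw d m s *
    ((∑ r : Bool, ∑ r' : Bool,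
        pairRootW ρ s r r' * leafWRooted d w ρ r y * leafWRooted d w ρ r' y') / leafW d w ρ y)

/-- Joint probability of the blocks `Y 0, …, Y (n-1)` of the autoregressive Ising
broadcast process with context depth `w`. -/
def arWeight (d w m n : ℕ) (ρ : ℝ) (Y : Fin n → ((Fin w → Fin d) → Bool)) : ℝ :=
  (if hn : 0 < n then leafW d w ρ (Y ⟨0, hn⟩) else 1) *
    ∏ i : Fin (n - 1),
      arStep d w m ρ (Y ⟨i.val, by have := i.isLt; omega⟩)
        (Y ⟨i.val + 1, by have := i.isLt; omega⟩)

/-- Expectation of a function of the blocks under the autoregressive Ising broadcast process. -/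
def arExp (d w m n : ℕ) (ρ : ℝ) (g : (Fin n → ((Fin w → Fin d) → Bool)) → ℝ) : ℝ :=
  ∑ Y : Fin n → ((Fin w → Fin d) → Bool), arWeight d w m n ρ Y * g Y

/-- The block sum `Z_i = Σ_ℓ (Y_i)_ℓ`. -/
def blockSum (d w : ℕ) (y : (Fin w → Fin d) → Bool) : ℝ :=
  ∑ f : Fin w → Fin d, spinVal (y f)

/-- The total sum `Σ_i Z_i` of all `d^h` generated spins. -/
def arTotal (d w n : ℕ) (Y : Fin n → ((Fin w → Fin d) → Bool)) : ℝ :=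
  ∑ i : Fin n, blockSum d w (Y i)

/-- Variance of the total sum of spins generated by the autoregressive Ising broadcast
process with context depth `w` on `T(d,h)`. -/
def arVar (d h w : ℕ) (ρ : ℝ) : ℝ :=
  arExp d w (h - w) (d ^ (h - w)) ρ (fun Y => arTotal d w (d ^ (h - w)) Y ^ 2)
    - arExp d w (h - w) (d ^ (h - w)) ρ (arTotal d w (d ^ (h - w))) ^ 2

/-- Second moment of the total sum of spins of the autoregressive process. -/
def arSecond (d h w : ℕ) (ρ : ℝ) : ℝ :=
  arExp d w (h - w) (d ^ (h - w)) ρ (fun Y => arTotal d w (d ^ (h - w)) Y ^ 2)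

/-- Fourth moment of the total sum of spins of the autoregressive process. -/
def arFourth (d h w : ℕ) (ρ : ℝ) : ℝ :=
  arExp d w (h - w) (d ^ (h - w)) ρ (fun Y => arTotal d w (d ^ (h - w)) Y ^ 4)

/-- `C_{d,ρ}(2) = (1 - 1/d)·dρ²/(dρ² - 1)`. -/
def C2const (d : ℕ) (ρ : ℝ) : ℝ := (1 - 1 / (d : ℝ)) * ((d : ℝ) * ρ ^ 2) / ((d : ℝ) * ρ ^ 2 - 1)

/-- `α* = Σ_{s ≥ 1} (1 - 1/d)(1/d)^{s-1} ρ^{2s}`. -/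
def alphaStar (d : ℕ) (ρ : ℝ) : ℝ :=
  ∑' s : ℕ, (1 - 1 / (d : ℝ)) * (1 / (d : ℝ)) ^ s * ρ ^ (2 * (s + 1))

/-- `A_{d,ρ}(2) = C_{d,ρ}(2) + 2α*/(1 - α* q*)`. -/
def A2const (d : ℕ) (ρ : ℝ) (qstar : ℝ) : ℝ :=
  C2const d ρ + 2 * alphaStar d ρ / (1 - alphaStar d ρ * qstar)

end

/-- `C_{d,ρ}(3)`. -/
noncomputable def C3const (d : ℕ) (ρ : ℝ) : ℝ :=
  (1 / (((d : ℝ) * ρ) ^ 2 - 1)) *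
    (3 * (((d : ℝ) - 1) ^ 2 / (d : ℝ)) * ((d : ℝ) * ρ ^ 2 / ((d : ℝ) * ρ ^ 2 - 1)) +
      ((d : ℝ) * ρ) ^ 2 * (1 - 1 / (d : ℝ)) * (1 - 2 / (d : ℝ)))

/-- `C_{d,ρ}(4)`. -/
noncomputable def C4const (d : ℕ) (ρ : ℝ) : ℝ :=
  (4 * ((d : ℝ) - 1) * ρ ^ 2 * C3const d ρ + 3 * ((d : ℝ) - 1) * C2const d ρ ^ 2 +
      6 * ((d : ℝ) - 1) * ((d : ℝ) - 2) * ρ ^ 2 * C2const d ρ +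
      ((d : ℝ) - 1) * ((d : ℝ) - 2) * ((d : ℝ) - 3) * ρ ^ 4) /
    ((d : ℝ) ^ 3 * ρ ^ 4 - 1)



noncomputable section MomAux
variable {Ω : Type} [Fintype Ω]

/-- unnormalized moment -/
def mMom (p S : Ω → ℝ) (k : ℕ) : ℝ := ∑ ω, p ω * S ω ^ k

/-- k-th moment of sum of n iid copies -/
def momExp (p S : Ω → ℝ) (k n : ℕ) : ℝ :=
  ∑ τ : Fin n → Ω, (∏ j, p (τ j)) * (∑ j, S (τ j)) ^ k

lemma sum_fn_succ {n : ℕ} (F : (Fin (n+1) → Ω) → ℝ) :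
    ∑ τ : Fin (n+1) → Ω, F τ = ∑ ω : Ω, ∑ τ : Fin n → Ω, F (Fin.cons ω τ) := by
  rw [← (Fin.consEquiv (fun _ => Ω)).sum_comp F, Fintype.sum_prod_type]
  rfl

lemma momExp_zero (p S : Ω → ℝ) (k : ℕ) :
    momExp p S k 0 = if k = 0 then 1 else 0 := by
  rw [momExp]
  rw [Fintype.sum_unique]
  simp
  rcases k with _ | k <;> simp

lemma momExp_succ (p S : Ω → ℝ) (k n : ℕ) :
    momExp p S k (n + 1) =
      ∑ i ∈ Finset.range (k + 1), (k.choose i : ℝ) * mMom p S i * momExp p S (k - i) n := by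
  rw [momExp, sum_fn_succ]
  have : ∀ (ω : Ω) (τ : Fin n → Ω),
      (∏ j, p ((Fin.cons ω τ : Fin (n+1) → Ω) j)) * (∑ j, S ((Fin.cons ω τ : Fin (n+1) → Ω) j)) ^ k
        = ∑ i ∈ Finset.range (k + 1),
            (k.choose i : ℝ) * (p ω * S ω ^ i) * ((∏ j, p (τ j)) * (∑ j, S (τ j)) ^ (k - i)) := by
    intro ω τ
    rw [Fin.prod_univ_succ, Fin.sum_univ_succ]
    simp only [Fin.cons_zero, Fin.cons_succ]
    rw [add_pow, Finset.mul_sum]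
    refine Finset.sum_congr rfl fun i hi => by ring
  simp only [this]
  conv_lhs => rw [Finset.sum_congr rfl (fun ω _ => Finset.sum_comm ..)]
  rw [Finset.sum_comm]
  refine Finset.sum_congr rfl fun i hi => ?_
  rw [mMom, momExp, mul_assoc, Finset.sum_mul_sum, Finset.mul_sum]
  refine Finset.sum_congr rfl fun ω _ => ?_
  rw [Finset.mul_sum]
  refine Finset.sum_congr rfl fun τ _ => by ring


variable {p S : Ω → ℝ}

lemma momExp_zero_pow (n : ℕ) : momExp p S 0 n = (mMom p S 0) ^ n := by
  induction n with
  | zero => simp [momExp_zero]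
  | succ n ih =>
      rw [momExp_succ]
      simp [Finset.sum_range_succ, ih, pow_succ]
      ring

lemma momExp_zero_k (h0 : mMom p S 0 = 1) (n : ℕ) : momExp p S 0 n = 1 := by
  induction n with
  | zero => simp [momExp_zero]
  | succ n ih =>
      rw [momExp_succ]
      simp [Finset.sum_range_succ, h0, ih]

lemma momExp_one (h0 : mMom p S 0 = 1) (n : ℕ) :
    momExp p S 1 n = n * mMom p S 1 := by
  induction n with
  | zero => simp [momExp_zero]
  | succ n ih =>
      rw [momExp_succ]
      simp only [Finset.sum_range_succ, Finset.sum_range_zero]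
      rw [momExp_zero_k h0, ih]
      push_cast
      simp [h0]
      ring

lemma momExp_two (h0 : mMom p S 0 = 1) (n : ℕ) :
    momExp p S 2 n = n * mMom p S 2 + n * (n - 1) * mMom p S 1 ^ 2 := by
  induction n with
  | zero => simp [momExp_zero]
  | succ n ih =>
      rw [momExp_succ]
      simp only [Finset.sum_range_succ, Finset.sum_range_zero]
      rw [momExp_zero_k h0, momExp_one h0, ih, h0]
      push_cast
      norm_num [Nat.choose]
      ring

lemma momExp_three (h0 : mMom p S 0 = 1) (n : ℕ) :
    momExp p S 3 n = n * mMom p S 3 + 3 * (n * (n - 1)) * mMom p S 2 * mMom p S 1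
      + n * (n - 1) * (n - 2) * mMom p S 1 ^ 3 := by
  induction n with
  | zero => simp [momExp_zero]
  | succ n ih =>
      rw [momExp_succ]
      simp only [Finset.sum_range_succ, Finset.sum_range_zero]
      rw [momExp_zero_k h0, momExp_one h0, momExp_two h0, ih, h0]
      push_cast
      norm_num [Nat.choose]
      ring

lemma momExp_four (h0 : mMom p S 0 = 1) (n : ℕ) :
    momExp p S 4 n = n * mMom p S 4 + 4 * (n * (n - 1)) * mMom p S 3 * mMom p S 1
      + 3 * (n * (n - 1)) * mMom p S 2 ^ 2
      + 6 * (n * (n - 1) * (n - 2)) * mMom p S 2 * mMom p S 1 ^ 2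
      + n * (n - 1) * (n - 2) * (n - 3) * mMom p S 1 ^ 4 := by
  induction n with
  | zero => simp [momExp_zero]
  | succ n ih =>
      rw [momExp_succ]
      simp only [Finset.sum_range_succ, Finset.sum_range_zero]
      rw [momExp_zero_k h0, momExp_one h0, momExp_two h0, momExp_three h0, ih, h0]
      push_cast
      norm_num [Nat.choose]
      ring

end MomAux


noncomputable section TreeAux

variable {d h : ℕ} {S : Type}

/-- Split a configuration of height `h+1` into root value and `d` subtree configurations. -/
def treeSplit (d h : ℕ) (S : Type) : (S × (Fin d → TreeConfig d h S)) ≃ TreeConfig d (h+1) S where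
  toFun x := fun ℓ =>
    match ℓ with
    | ⟨0, _⟩ => fun _ => x.1
    | ⟨m+1, hm⟩ => fun f => x.2 (f 0) ⟨m, Nat.lt_of_succ_lt_succ hm⟩ (fun k => f k.succ)
  invFun σ := (rootOf σ, fun j ℓ g => σ ℓ.succ (Fin.cons j g))
  left_inv x := by
    obtain ⟨b, τ⟩ := x
    refine Prod.ext rfl ?_
    funext j ℓ g
    show τ ((Fin.cons j g : Fin (ℓ.val+1) → Fin d) 0) ⟨ℓ.val, ℓ.isLt⟩
        (fun k => (Fin.cons j g : Fin (ℓ.val+1) → Fin d) k.succ) = τ j ℓ g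
    simp [Fin.cons_zero, Fin.cons_succ]
  right_inv σ := by
    funext ℓ f
    obtain ⟨m, hm⟩ := ℓ
    match m, hm with
    | 0, hm =>
        show σ ⟨0, Nat.succ_pos _⟩ Fin.elim0 = σ ⟨0, hm⟩ f
        congr 1
        funext k; exact k.elim0
    | m+1, hm =>
        show σ ⟨m+1, hm⟩ (Fin.cons (f 0) (fun k => f k.succ)) = σ ⟨m+1, hm⟩ f
        exact congrArg _ (Fin.cons_self_tail f)

lemma treeSplit_zero (b : S) (τ : Fin d → TreeConfig d h S) (hz : 0 < h + 2)
    (f : Fin 0 → Fin d) :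
    treeSplit d h S (b, τ) ⟨0, hz⟩ f = b := rfl

lemma treeSplit_succ (b : S) (τ : Fin d → TreeConfig d h S) (m : ℕ) (hm : m + 1 < h + 2)
    (f : Fin (m+1) → Fin d) :
    treeSplit d h S (b, τ) ⟨m+1, hm⟩ f
      = τ (f 0) ⟨m, Nat.lt_of_succ_lt_succ hm⟩ (fun k => f k.succ) := rfl

lemma rootOf_treeSplit (b : S) (τ : Fin d → TreeConfig d h S) :
    rootOf (treeSplit d h S (b, τ)) = b := rfl

lemma leavesOf_treeSplit (b : S) (τ : Fin d → TreeConfig d h S)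
    (f : Fin (h+1) → Fin d) :
    leavesOf (treeSplit d h S (b, τ)) f = leavesOf (τ (f 0)) (Fin.tail f) := by
  rw [leavesOf, treeSplit_succ]
  rfl

lemma leafSum_treeSplit (b : Bool) (τ : Fin d → TreeConfig d h Bool) :
    leafSum d (h+1) (treeSplit d h Bool (b, τ)) = ∑ j, leafSum d h (τ j) := by
  rw [leafSum, ← (Fin.consEquiv (fun _ => Fin d)).sum_comp
    (fun f => spinVal (leavesOf (treeSplit d h Bool (b, τ)) f)), Fintype.sum_prod_type]
  refine Finset.sum_congr rfl fun j _ => Finset.sum_congr rfl fun g _ => ?_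
  show spinVal (leavesOf (treeSplit d h Bool (b, τ)) (Fin.cons j g)) = _
  rw [leavesOf_treeSplit]
  simp [leafSum, Fin.tail, Fin.cons_succ, Fin.cons_zero]

lemma edgeProd_treeSplit_zero (W : S → S → ℝ) (b : S) (τ : Fin d → TreeConfig d h S)
    (p0 : (0:ℕ) < h + 2) (p1 : 0 + 1 < h + 2) :
    (∏ f : Fin 1 → Fin d,
        W (treeSplit d h S (b, τ) ⟨0, p0⟩ (fun k => f k.castSucc))
          (treeSplit d h S (b, τ) ⟨0+1, p1⟩ f))
      = ∏ j : Fin d, W b (rootOf (τ j)) := by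
  rw [← Equiv.prod_comp ((Equiv.funUnique (Fin 1) (Fin d)).symm)
    (fun f : Fin 1 → Fin d =>
      W (treeSplit d h S (b, τ) ⟨0, p0⟩ (fun k => f k.castSucc))
        (treeSplit d h S (b, τ) ⟨0+1, p1⟩ f))]
  refine Finset.prod_congr rfl fun j _ => ?_
  rw [treeSplit_zero, treeSplit_succ]
  congr 1
  show τ (((Equiv.funUnique (Fin 1) (Fin d)).symm j) 0) ⟨0, _⟩ _ = rootOf (τ j)
  rw [rootOf]
  have hj : ((Equiv.funUnique (Fin 1) (Fin d)).symm j) 0 = j := rfl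
  rw [hj]
  congr 1
  funext k; exact k.elim0

lemma edgeProd_treeSplit_key (W : S → S → ℝ) (b : S) (τ : Fin d → TreeConfig d h S)
    (m : ℕ) (hm : m < h) :
    (∏ f : Fin (m+1+1) → Fin d,
        W (treeSplit d h S (b, τ) ⟨m+1, Nat.lt_succ_of_lt (Nat.succ_lt_succ hm)⟩
            (fun k => f k.castSucc))
          (treeSplit d h S (b, τ) ⟨m+1+1, Nat.succ_lt_succ (Nat.succ_lt_succ hm)⟩ f))
      = ∏ j : Fin d, ∏ g : Fin (m+1) → Fin d,
          W (τ j ⟨m, Nat.lt_succ_of_lt hm⟩ (fun k => g k.castSucc))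
            (τ j ⟨m+1, Nat.succ_lt_succ hm⟩ g) := by
  rw [← (Fin.consEquiv (fun _ => Fin d)).prod_comp, Fintype.prod_prod_type]
  refine Finset.prod_congr rfl fun j _ => Finset.prod_congr rfl fun g _ => ?_
  show W (treeSplit d h S (b, τ) ⟨m+1, _⟩
      (fun k => (Fin.cons j g : Fin (m+1+1) → Fin d) k.castSucc))
    (treeSplit d h S (b, τ) ⟨m+1+1, _⟩ (Fin.cons j g : Fin (m+1+1) → Fin d)) = _
  rw [treeSplit_succ, treeSplit_succ]
  have e1 : ((Fin.cons j g : Fin (m+1+1) → Fin d) (Fin.castSucc 0)) = j := by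
    rw [show (Fin.castSucc 0 : Fin (m+1+1)) = 0 from rfl, Fin.cons_zero]
  have e2 : (fun k : Fin m => (Fin.cons j g : Fin (m+1+1) → Fin d) k.succ.castSucc)
      = fun k => g k.castSucc := by
    funext k
    rw [← Fin.succ_castSucc, Fin.cons_succ]
  have e3 : (fun k : Fin (m+1) => (Fin.cons j g : Fin (m+1+1) → Fin d) k.succ) = g := by
    funext k
    rw [Fin.cons_succ]
  rw [e1, e2, e3, Fin.cons_zero]

lemma edgeProd_treeSplit (W : S → S → ℝ) (b : S) (τ : Fin d → TreeConfig d h S) :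
    edgeProd d (h+1) W (treeSplit d h S (b, τ)) =
      ∏ j, (W b (rootOf (τ j)) * edgeProd d h W (τ j)) := by
  rw [edgeProd, Fin.prod_univ_succ, Finset.prod_mul_distrib]
  congr 1
  · exact edgeProd_treeSplit_zero W b τ (Nat.succ_pos _) (Nat.succ_lt_succ (Nat.succ_pos _))
  · refine Eq.trans (Finset.prod_congr rfl fun i _ => edgeProd_treeSplit_key W b τ i.val i.isLt) ?_
    rw [Finset.prod_comm]
    refine Finset.prod_congr rfl fun j _ => ?_
    rw [edgeProd]

end TreeAux




noncomputable section IsingAux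

/-- Root-conditioned (unnormalized) moment. -/
def mRoot (d h : ℕ) (ρ : ℝ) (r : Bool) (k : ℕ) : ℝ :=
  ∑ σ : TreeConfig d h Bool,
    (if rootOf σ = r then (1:ℝ) else 0) * edgeProd d h (isingEdge ρ) σ * leafSum d h σ ^ k

lemma isingMoment_eq_mRoot (d h : ℕ) (ρ : ℝ) (k : ℕ) :
    isingMoment d h ρ k = mRoot d h ρ true k := by
  rw [isingMoment, mRoot]
  refine Finset.sum_congr rfl fun σ _ => ?_
  rw [isingWRooted]

/-- The weight of a subtree hanging from a parent with spin `r`. -/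
def pIsing (d h : ℕ) (ρ : ℝ) (r : Bool) (σ : TreeConfig d h Bool) : ℝ :=
  isingEdge ρ r (rootOf σ) * edgeProd d h (isingEdge ρ) σ

/-- Flip all spins. -/
def flipConfig (d h : ℕ) : TreeConfig d h Bool ≃ TreeConfig d h Bool where
  toFun σ := fun ℓ f => !(σ ℓ f)
  invFun σ := fun ℓ f => !(σ ℓ f)
  left_inv σ := by funext ℓ f; simp
  right_inv σ := by funext ℓ f; simp

lemma isingEdge_not (ρ : ℝ) (a b : Bool) : isingEdge ρ (!a) (!b) = isingEdge ρ a b := by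
  cases a <;> cases b <;> simp [isingEdge]

lemma spinVal_not (b : Bool) : spinVal (!b) = -spinVal b := by
  cases b <;> simp [spinVal]

lemma rootOf_flip (d h : ℕ) (σ : TreeConfig d h Bool) :
    rootOf (flipConfig d h σ) = !(rootOf σ) := rfl

lemma edgeProd_flip (d h : ℕ) (ρ : ℝ) (σ : TreeConfig d h Bool) :
    edgeProd d h (isingEdge ρ) (flipConfig d h σ) = edgeProd d h (isingEdge ρ) σ := by
  rw [edgeProd, edgeProd]
  exact Finset.prod_congr rfl fun ℓ _ => Finset.prod_congr rfl fun f _ => isingEdge_not ..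

lemma leafSum_flip (d h : ℕ) (σ : TreeConfig d h Bool) :
    leafSum d h (flipConfig d h σ) = -leafSum d h σ := by
  rw [leafSum, leafSum, ← Finset.sum_neg_distrib]
  exact Finset.sum_congr rfl fun f _ => spinVal_not _

lemma mRoot_false (d h : ℕ) (ρ : ℝ) (k : ℕ) :
    mRoot d h ρ false k = (-1:ℝ)^k * mRoot d h ρ true k := by
  rw [mRoot, ← Equiv.sum_comp (flipConfig d h)
    (fun σ => (if rootOf σ = false then (1:ℝ) else 0) * edgeProd d h (isingEdge ρ) σ
      * leafSum d h σ ^ k), mRoot, Finset.mul_sum]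
  refine Finset.sum_congr rfl fun σ _ => ?_
  rw [rootOf_flip, edgeProd_flip, leafSum_flip, neg_pow]
  cases hb : rootOf σ <;> (simp [hb]; try ring)

lemma mRoot_height_zero (d : ℕ) (ρ : ℝ) (r : Bool) (k : ℕ) :
    mRoot d 0 ρ r k = spinVal r ^ k := by
  let e : Bool ≃ TreeConfig d 0 Bool := {
    toFun := fun b => fun _ _ => b
    invFun := fun σ => rootOf σ
    left_inv := fun b => rfl
    right_inv := by
      intro σ
      funext ℓ f
      obtain ⟨lv, hl⟩ := ℓ
      have : lv = 0 := by omega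
      subst this
      show σ ⟨0, Nat.succ_pos _⟩ Fin.elim0 = σ ⟨0, hl⟩ f
      congr 1
      funext k; exact k.elim0 }
  rw [mRoot, ← Equiv.sum_comp e (fun σ => (if rootOf σ = r then (1:ℝ) else 0)
    * edgeProd d 0 (isingEdge ρ) σ * leafSum d 0 σ ^ k)]
  have hE : ∀ b, edgeProd d 0 (isingEdge ρ) (e b) = 1 := by
    intro b; rw [edgeProd]; exact Finset.prod_of_isEmpty _
  have hS : ∀ b, leafSum d 0 (e b) = spinVal b := by
    intro b; rw [leafSum, Fintype.sum_unique]; rfl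
  have hR : ∀ b, rootOf (e b) = b := fun b => rfl
  rw [Fintype.sum_bool]
  rw [hE, hE, hS, hS, hR, hR]
  cases r <;> simp

lemma mRoot_succ (d h : ℕ) (ρ : ℝ) (r : Bool) (k : ℕ) :
    mRoot d (h+1) ρ r k = momExp (pIsing d h ρ r) (leafSum d h) k d := by
  rw [mRoot, ← Equiv.sum_comp (treeSplit d h Bool)
    (fun σ => (if rootOf σ = r then (1:ℝ) else 0) * edgeProd d (h+1) (isingEdge ρ) σ
      * leafSum d (h+1) σ ^ k), Fintype.sum_prod_type]
  have hterm : ∀ (b : Bool) (τ : Fin d → TreeConfig d h Bool),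
      (if rootOf (treeSplit d h Bool (b, τ)) = r then (1:ℝ) else 0)
        * edgeProd d (h+1) (isingEdge ρ) (treeSplit d h Bool (b, τ))
        * leafSum d (h+1) (treeSplit d h Bool (b, τ)) ^ k
      = if b = r then ((∏ j, pIsing d h ρ b (τ j)) * (∑ j, leafSum d h (τ j)) ^ k) else 0 := by
    intro b τ
    rw [rootOf_treeSplit, edgeProd_treeSplit, leafSum_treeSplit]
    by_cases hb : b = r <;> simp [hb, pIsing]
  simp only [hterm]
  rw [Fintype.sum_bool]
  cases r <;> simp [momExp]

lemma mMom_pIsing (d h : ℕ) (ρ : ℝ) (r : Bool) (i : ℕ) :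
    mMom (pIsing d h ρ r) (leafSum d h) i
      = isingEdge ρ r true * mRoot d h ρ true i + isingEdge ρ r false * mRoot d h ρ false i := by
  rw [mMom, mRoot, mRoot, Finset.mul_sum, Finset.mul_sum, ← Finset.sum_add_distrib]
  refine Finset.sum_congr rfl fun σ _ => ?_
  rw [pIsing]
  cases hb : rootOf σ <;> (simp [hb]; try ring)

lemma mRoot_mass (d : ℕ) (ρ : ℝ) : ∀ (h : ℕ) (r : Bool), mRoot d h ρ r 0 = 1 := by
  intro h
  induction h with
  | zero => intro r; rw [mRoot_height_zero]; simp
  | succ h ih =>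
      intro r
      rw [mRoot_succ, momExp_zero_pow, mMom_pIsing, ih, ih]
      have : isingEdge ρ r true * 1 + isingEdge ρ r false * 1 = 1 := by
        cases r <;> simp [isingEdge] <;> ring
      rw [this, one_pow]

lemma tMom (d h : ℕ) (ρ : ℝ) (i : ℕ) :
    mMom (pIsing d h ρ true) (leafSum d h) i
      = ((1+ρ)/2 + (1-ρ)/2 * (-1:ℝ)^i) * isingMoment d h ρ i := by
  rw [mMom_pIsing, mRoot_false, ← isingMoment_eq_mRoot]
  simp [isingEdge]
  ring

lemma tMom_zero (d h : ℕ) (ρ : ℝ) :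
    mMom (pIsing d h ρ true) (leafSum d h) 0 = 1 := by
  rw [mMom_pIsing, mRoot_mass, mRoot_mass]
  simp [isingEdge]
  ring

end IsingAux


noncomputable section RecAux

lemma isingMoment_height_zero (d : ℕ) (ρ : ℝ) (k : ℕ) :
    isingMoment d 0 ρ k = 1 := by
  rw [isingMoment_eq_mRoot, mRoot_height_zero]
  simp [spinVal]

lemma M1_rec (d h : ℕ) (ρ : ℝ) :
    isingMoment d (h+1) ρ 1 = (d:ℝ) * ρ * isingMoment d h ρ 1 := by
  rw [isingMoment_eq_mRoot, mRoot_succ, momExp_one (tMom_zero d h ρ), tMom,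
    show ((-1:ℝ))^(1:ℕ) = -1 by norm_num]
  ring

lemma M1_closed (d : ℕ) (ρ : ℝ) : ∀ h : ℕ, isingMoment d h ρ 1 = ((d:ℝ)*ρ)^h := by
  intro h
  induction h with
  | zero => rw [isingMoment_height_zero]; rfl
  | succ h ih => rw [M1_rec, ih]; ring

lemma M2_rec (d h : ℕ) (ρ : ℝ) :
    isingMoment d (h+1) ρ 2 = (d:ℝ) * isingMoment d h ρ 2
      + (d:ℝ) * ((d:ℝ)-1) * ρ^2 * ((d:ℝ)*ρ)^(2*h) := by
  rw [isingMoment_eq_mRoot, mRoot_succ, momExp_two (tMom_zero d h ρ), tMom, tMom,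
    M1_closed]
  rw [show ((-1:ℝ))^(1:ℕ) = -1 by norm_num, show ((-1:ℝ))^(2:ℕ) = 1 by norm_num]
  ring

lemma M3_rec (d h : ℕ) (ρ : ℝ) :
    isingMoment d (h+1) ρ 3 = (d:ℝ) * ρ * isingMoment d h ρ 3
      + 3 * ((d:ℝ) * ((d:ℝ)-1)) * isingMoment d h ρ 2 * (ρ * ((d:ℝ)*ρ)^h)
      + (d:ℝ) * ((d:ℝ)-1) * ((d:ℝ)-2) * ρ^3 * ((d:ℝ)*ρ)^(3*h) := by
  rw [isingMoment_eq_mRoot, mRoot_succ, momExp_three (tMom_zero d h ρ), tMom, tMom, tMom,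
    M1_closed]
  rw [show ((-1:ℝ))^(1:ℕ) = -1 by norm_num, show ((-1:ℝ))^(2:ℕ) = 1 by norm_num,
    show ((-1:ℝ))^(3:ℕ) = -1 by norm_num]
  ring

lemma M4_rec (d h : ℕ) (ρ : ℝ) :
    isingMoment d (h+1) ρ 4 = (d:ℝ) * isingMoment d h ρ 4
      + 4 * ((d:ℝ) * ((d:ℝ)-1)) * ρ^2 * isingMoment d h ρ 3 * ((d:ℝ)*ρ)^h
      + 3 * ((d:ℝ) * ((d:ℝ)-1)) * isingMoment d h ρ 2 ^ 2
      + 6 * ((d:ℝ) * ((d:ℝ)-1) * ((d:ℝ)-2)) * isingMoment d h ρ 2 * ρ^2 * ((d:ℝ)*ρ)^(2*h)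
      + (d:ℝ) * ((d:ℝ)-1) * ((d:ℝ)-2) * ((d:ℝ)-3) * ρ^4 * ((d:ℝ)*ρ)^(4*h) := by
  rw [isingMoment_eq_mRoot, mRoot_succ, momExp_four (tMom_zero d h ρ), tMom, tMom, tMom, tMom,
    M1_closed]
  rw [show ((-1:ℝ))^(1:ℕ) = -1 by norm_num, show ((-1:ℝ))^(2:ℕ) = 1 by norm_num,
    show ((-1:ℝ))^(3:ℕ) = -1 by norm_num, show ((-1:ℝ))^(4:ℕ) = 1 by norm_num]
  ring

/-- The normalized moment sequence. -/
def cSeq (d : ℕ) (ρ : ℝ) (k h : ℕ) : ℝ := isingMoment d h ρ k / ((d:ℝ)*ρ)^(k*h)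

/-- Convergence of an affine recursion. -/
lemma tendsto_affine {x b : ℕ → ℝ} {r B L : ℝ} (hr : |r| < 1)
    (hx : ∀ n, x (n+1) = r * x n + b n)
    (hb : Filter.Tendsto b Filter.atTop (nhds B))
    (hL : L = r * L + B) : Filter.Tendsto x Filter.atTop (nhds L) := by
  have hr0 : 0 ≤ |r| := abs_nonneg r
  rw [Metric.tendsto_atTop] at hb ⊢
  intro ε hε
  have h1r : 0 < 1 - |r| := by linarith
  have hε4 : 0 < ε * (1 - |r|) / 4 := by positivity
  obtain ⟨N, hN⟩ := hb (ε * (1 - |r|) / 4) hε4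
  have key : ∀ k, |x (N+k) - L| ≤ |r|^k * |x N - L| + ε/2 := by
    intro k
    induction k with
    | zero => simp; linarith
    | succ k ih =>
        have hstep : x (N+(k+1)) - L = r * (x (N+k) - L) + (b (N+k) - B) := by
          have : N+(k+1) = (N+k)+1 := by omega
          rw [this, hx (N+k)]
          linarith [hL]
        rw [hstep]
        have hbb : |b (N+k) - B| ≤ ε * (1 - |r|) / 4 := by
          have := hN (N+k) (Nat.le_add_right N k)
          rw [Real.dist_eq] at this
          linarith
        calc |r * (x (N+k) - L) + (b (N+k) - B)|
            ≤ |r * (x (N+k) - L)| + |b (N+k) - B| := abs_add_le _ _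
          _ = |r| * |x (N+k) - L| + |b (N+k) - B| := by rw [abs_mul]
          _ ≤ |r| * (|r|^k * |x N - L| + ε/2) + ε * (1 - |r|) / 4 :=
              add_le_add (mul_le_mul_of_nonneg_left ih hr0) hbb
          _ ≤ |r|^(k+1) * |x N - L| + ε/2 := by
              have habs : 0 ≤ |x N - L| := abs_nonneg _
              have hrk : 0 ≤ |r|^k := pow_nonneg hr0 k
              have e1 : |r| * (|r|^k * |x N - L|) = |r|^(k+1) * |x N - L| := by ring
              have e2 : |r| * (ε/2) + ε * (1 - |r|) / 4 ≤ ε/2 := by nlinarith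
              nlinarith
  have hpow : Filter.Tendsto (fun k => |r|^k * |x N - L|) Filter.atTop (nhds 0) := by
    have := tendsto_pow_atTop_nhds_zero_of_abs_lt_one (r := |r|) (by rwa [abs_abs])
    simpa using this.mul_const (|x N - L|)
  rw [Metric.tendsto_atTop] at hpow
  obtain ⟨K, hK⟩ := hpow (ε/4) (by positivity)
  refine ⟨N+K, fun n hn => ?_⟩
  obtain ⟨k, rfl, hKk⟩ : ∃ k, n = N + k ∧ K ≤ k := ⟨n - N, by omega, by omega⟩
  have h3 := key k
  have h4 := hK k hKk
  rw [Real.dist_eq, sub_zero] at h4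
  have h5 : |r|^k * |x N - L| < ε/4 := by
    have hnn : (0:ℝ) ≤ |r|^k * |x N - L| := by positivity
    rwa [abs_of_nonneg hnn] at h4
  rw [Real.dist_eq]
  calc |x (N+k) - L| ≤ |r|^k * |x N - L| + ε/2 := h3
    _ < ε := by linarith

end RecAux


set_option maxHeartbeats 1600000 in
lemma C4_fixed_point (d : ℕ) (ρ : ℝ) (hdne : (d:ℝ) ≠ 0) (hρne : ρ ≠ 0)
    (hAne : (d:ℝ)*ρ^2 - 1 ≠ 0) (hBne' : ((d:ℝ)*ρ)^2 - 1 ≠ 0)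
    (hCne : (d:ℝ)^3*ρ^4 - 1 ≠ 0) :
    C4const d ρ = (1/((d:ℝ)^3*ρ^4)) * C4const d ρ
      + (4*((d:ℝ)-1)*ρ^2/((d:ℝ)^3*ρ^4) * C3const d ρ
        + 3*((d:ℝ)-1)/((d:ℝ)^3*ρ^4) * (C2const d ρ * C2const d ρ)
        + 6*((d:ℝ)-1)*((d:ℝ)-2)*ρ^2/((d:ℝ)^3*ρ^4) * C2const d ρ
        + ((d:ℝ)-1)*((d:ℝ)-2)*((d:ℝ)-3)*ρ^4/((d:ℝ)^3*ρ^4)) := by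
  rw [C4const, C3const, C2const]
  field_simp
  ring

lemma C3_fixed_point (d : ℕ) (ρ : ℝ) (hdne : (d:ℝ) ≠ 0) (hρne : ρ ≠ 0)
    (hAne : (d:ℝ)*ρ^2 - 1 ≠ 0) (hBne' : ((d:ℝ)*ρ)^2 - 1 ≠ 0) :
    C3const d ρ = (1/((d:ℝ)^2*ρ^2)) * C3const d ρ
      + (3*((d:ℝ)-1)/((d:ℝ)^2*ρ^2) * C2const d ρ + ((d:ℝ)-1)*((d:ℝ)-2)/(d:ℝ)^2) := by
  rw [C3const, C2const]
  have hB2 : (d:ℝ)^2*ρ^2 - 1 ≠ 0 := by rw [← mul_pow]; exact hBne'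
  field_simp
  ring

lemma C2_fixed_point (d : ℕ) (ρ : ℝ) (hdne : (d:ℝ) ≠ 0) (hρne : ρ ≠ 0)
    (hAne : (d:ℝ)*ρ^2 - 1 ≠ 0) :
    C2const d ρ = (1/((d:ℝ)*ρ^2)) * C2const d ρ + ((d:ℝ)-1)/(d:ℝ) := by
  rw [C2const]
  field_simp
  ring

/-- Asymptotics of the fourth conditional moment of the leaf-spin sum of
the Ising broadcast process above the Kesten–Stigum threshold. -/
theorem statement10 (d : ℕ) (hd : 2 ≤ d) (ρ : ℝ) (hρ0 : 0 < ρ) (hρ1 : ρ < 1)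
    (hKS : 1 < (d : ℝ) * ρ ^ 2) :
    Filter.Tendsto (fun h : ℕ => isingMoment d h ρ 4 / ((d : ℝ) * ρ) ^ (4 * h))
      Filter.atTop (nhds (C4const d ρ)) := by
  have hd0 : (2:ℝ) ≤ (d:ℝ) := by exact_mod_cast hd
  have hdpos : (0:ℝ) < (d:ℝ) := by linarith
  have hdne : (d:ℝ) ≠ 0 := ne_of_gt hdpos
  have hρne : ρ ≠ 0 := ne_of_gt hρ0
  have hdρpos : 0 < (d:ℝ)*ρ := by positivity
  have hdρne : (d:ℝ)*ρ ≠ 0 := ne_of_gt hdρpos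
  have hB : 1 < (d:ℝ)^2*ρ^2 := by nlinarith
  have hC : 1 < (d:ℝ)^3*ρ^4 := by nlinarith
  have hApos : 0 < (d:ℝ)*ρ^2 := by positivity
  have hBpos : 0 < (d:ℝ)^2*ρ^2 := by positivity
  have hCpos : 0 < (d:ℝ)^3*ρ^4 := by positivity
  have hAne : (d:ℝ)*ρ^2 - 1 ≠ 0 := ne_of_gt (by linarith)
  have hBne : (d:ℝ)^2*ρ^2 - 1 ≠ 0 := ne_of_gt (by linarith)
  have hBne' : ((d:ℝ)*ρ)^2 - 1 ≠ 0 := by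
    have : ((d:ℝ)*ρ)^2 = (d:ℝ)^2*ρ^2 := by ring
    rw [this]; exact hBne
  have hCne : (d:ℝ)^3*ρ^4 - 1 ≠ 0 := ne_of_gt (by linarith)
  -- recursions for the normalized sequences
  have hc2rec : ∀ h, cSeq d ρ 2 (h+1)
      = (1/((d:ℝ)*ρ^2)) * cSeq d ρ 2 h + ((d:ℝ)-1)/(d:ℝ) := by
    intro h
    have hp : ((d:ℝ)*ρ) ^ (2*h) ≠ 0 := pow_ne_zero _ hdρne
    have hq : ((d:ℝ)*ρ) ^ (2*(h+1)) ≠ 0 := pow_ne_zero _ hdρne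
    simp only [cSeq]
    rw [M2_rec]
    field_simp
    ring
  have hc3rec : ∀ h, cSeq d ρ 3 (h+1)
      = (1/((d:ℝ)^2*ρ^2)) * cSeq d ρ 3 h
        + (3*((d:ℝ)-1)/((d:ℝ)^2*ρ^2) * cSeq d ρ 2 h + ((d:ℝ)-1)*((d:ℝ)-2)/(d:ℝ)^2) := by
    intro h
    have hp : ((d:ℝ)*ρ) ^ (3*h) ≠ 0 := pow_ne_zero _ hdρne
    have hq : ((d:ℝ)*ρ) ^ (3*(h+1)) ≠ 0 := pow_ne_zero _ hdρne
    have hp2 : ((d:ℝ)*ρ) ^ (2*h) ≠ 0 := pow_ne_zero _ hdρne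
    have hph : ((d:ℝ)*ρ) ^ h ≠ 0 := pow_ne_zero _ hdρne
    simp only [cSeq]
    rw [M3_rec]
    field_simp
    ring
  have hc4rec : ∀ h, cSeq d ρ 4 (h+1)
      = (1/((d:ℝ)^3*ρ^4)) * cSeq d ρ 4 h
        + (4*((d:ℝ)-1)*ρ^2/((d:ℝ)^3*ρ^4) * cSeq d ρ 3 h
          + 3*((d:ℝ)-1)/((d:ℝ)^3*ρ^4) * (cSeq d ρ 2 h * cSeq d ρ 2 h)
          + 6*((d:ℝ)-1)*((d:ℝ)-2)*ρ^2/((d:ℝ)^3*ρ^4) * cSeq d ρ 2 h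
          + ((d:ℝ)-1)*((d:ℝ)-2)*((d:ℝ)-3)*ρ^4/((d:ℝ)^3*ρ^4)) := by
    intro h
    have hp : ((d:ℝ)*ρ) ^ (4*h) ≠ 0 := pow_ne_zero _ hdρne
    have hq : ((d:ℝ)*ρ) ^ (4*(h+1)) ≠ 0 := pow_ne_zero _ hdρne
    have hp3 : ((d:ℝ)*ρ) ^ (3*h) ≠ 0 := pow_ne_zero _ hdρne
    have hp2 : ((d:ℝ)*ρ) ^ (2*h) ≠ 0 := pow_ne_zero _ hdρne
    have hph : ((d:ℝ)*ρ) ^ h ≠ 0 := pow_ne_zero _ hdρne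
    simp only [cSeq]
    rw [M4_rec]
    field_simp
    ring
  -- convergence of cSeq 2
  have hc2 : Filter.Tendsto (cSeq d ρ 2) Filter.atTop (nhds (C2const d ρ)) := by
    refine tendsto_affine ?_ hc2rec tendsto_const_nhds ?_
    · rw [abs_of_pos (by positivity)]
      exact (div_lt_one hApos).mpr hKS
    · exact C2_fixed_point d ρ hdne hρne hAne
  -- convergence of cSeq 3
  have hc3 : Filter.Tendsto (cSeq d ρ 3) Filter.atTop (nhds (C3const d ρ)) := by
    refine tendsto_affine ?_ hc3rec
      (((hc2.const_mul (3*((d:ℝ)-1)/((d:ℝ)^2*ρ^2))).add_const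
        (((d:ℝ)-1)*((d:ℝ)-2)/(d:ℝ)^2))) ?_
    · rw [abs_of_pos (by positivity)]
      exact (div_lt_one hBpos).mpr hB
    · exact C3_fixed_point d ρ hdne hρne hAne hBne'
  -- convergence of cSeq 4
  have hc4 : Filter.Tendsto (cSeq d ρ 4) Filter.atTop (nhds (C4const d ρ)) := by
    refine tendsto_affine ?_ hc4rec
      (((((hc3.const_mul (4*((d:ℝ)-1)*ρ^2/((d:ℝ)^3*ρ^4))).add
        ((hc2.mul hc2).const_mul (3*((d:ℝ)-1)/((d:ℝ)^3*ρ^4)))).add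
        (hc2.const_mul (6*((d:ℝ)-1)*((d:ℝ)-2)*ρ^2/((d:ℝ)^3*ρ^4)))).add_const
        (((d:ℝ)-1)*((d:ℝ)-2)*((d:ℝ)-3)*ρ^4/((d:ℝ)^3*ρ^4)))) ?_
    · rw [abs_of_pos (by positivity)]
      exact (div_lt_one hCpos).mpr hC
    · exact C4_fixed_point d ρ hdne hρne hAne hBne' hCne
  exact hc4
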